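/- Walk generating functions of the Bethe lattice: let n ≥ 2 and let h ∈ ℚ[[z]] be the unique formal power series satisfying h = 1 + (n−1)·z²·h². Then 1 − n·z²·h is invertible in ℚ[[z]], and for every vertex v of the n-regular tree T_n at graph distance d ≥ 0 from the root o, the generating function Σ_{m≥0} N_m z^m, where N_m is the (finite) number of walks of length m from o to v in T_n, equals z^d·h^d·(1 − n·z²·h)⁻¹. In particular the closed-walk generating function g at any vertex satisfies (n²z² − 1)·g² + (2 − n)·g + (n − 1) = 0 in ℚ[[z]]. -/

import Mathlib

/-- The vertices of the Bethe lattice (the `n`-regular tree) `T_n`: finite sequences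
over `{1, …, n}` with no two equal consecutive letters; the empty sequence is the
root `o`. -/
def BetheV (n : ℕ) : Type := {l : List (Fin n) // l.Chain' (· ≠ ·)}

/-- The root of the Bethe lattice. -/
def betheRoot (n : ℕ) : BetheV n := ⟨[], List.isChain_nil⟩

/-- Adjacency in the Bethe lattice: two vertices are adjacent iff one is obtained
from the other by prepending a single letter. -/
def BetheAdj (n : ℕ) (u v : BetheV n) : Prop :=
  ∃ a : Fin n, u.val = a :: v.val ∨ v.val = a :: u.val

/-- The (finite) number of walks of length `m` from `u` to `v` in the Bethe lattice
`T_n`, walks being recorded by their vertex sequences. -/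
noncomputable def betheWalks (n m : ℕ) (u v : BetheV n) : ℕ :=
  Nat.card {L : List (BetheV n) // L.length = m + 1 ∧ L.head? = some u ∧
    L.getLast? = some v ∧ L.Chain' (BetheAdj n)}

namespace Stmt19

variable {n : ℕ}

instance : DecidableEq (BetheV n) := by unfold BetheV; infer_instance


variable {n : ℕ}

abbrev Red (l : List (Fin n)) : Prop := l.Chain' (· ≠ ·)

def step (a : Fin n) (l : List (Fin n)) : List (Fin n) :=
  if l.head? = some a then l.tail else a :: l

theorem step_red {a : Fin n} {l : List (Fin n)} (hl : Red l) : Red (step a l) := by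
  unfold step
  split
  · exact hl.tail
  · next hne =>
    refine List.isChain_cons.mpr ⟨fun y hy => ?_, hl⟩
    rintro rfl
    exact hne hy

theorem step_step {a : Fin n} {l : List (Fin n)} (hl : Red l) : step a (step a l) = l := by
  unfold step
  split
  · next hh =>
    cases l with
    | nil => simp at hh
    | cons x t =>
      simp only [List.head?_cons, Option.some.injEq] at hh
      subst hh
      simp only [List.tail_cons]
      have : t.head? ≠ some x := by
        intro ht
        cases t with
        | nil => simp at ht
        | cons y s =>
          simp only [List.head?_cons, Option.some.injEq] at ht
          exact (List.isChain_cons_cons.mp hl).1 ht.symm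
      exact if_neg this
  · simp [step]

theorem step_inj {a b : Fin n} {l : List (Fin n)} (hab : step a l = step b l) : a = b := by
  unfold step at hab
  split at hab <;> split at hab
  · next h1 h2 =>
    rw [h1] at h2
    exact Option.some_injective _ h2
  · next h1 h2 =>
    exfalso
    cases l with
    | nil => simp at h1
    | cons x t =>
      have := congrArg List.length hab
      simp at this
      omega
  · next h1 h2 =>
    exfalso
    cases l with
    | nil => simp at h2
    | cons x t =>
      have := congrArg List.length hab
      simp at this
      omega
  · exact (List.cons.injEq _ _ _ _ ▸ hab).1

theorem adj_iff {u v : BetheV n} : BetheAdj n u v ↔ ∃ a, u.val = step a v.val := by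
  constructor
  · rintro ⟨a, h | h⟩
    · refine ⟨a, ?_⟩
      unfold step
      rw [if_neg, h]
      intro hv
      cases hv' : v.val with
      | nil => rw [hv'] at hv; simp at hv
      | cons x t =>
        rw [hv'] at hv
        simp only [List.head?_cons, Option.some.injEq] at hv
        have := u.2
        rw [h, hv'] at this
        exact (List.isChain_cons_cons.mp this).1 hv.symm
    · refine ⟨a, ?_⟩
      unfold step
      rw [h, if_pos (by simp), List.tail_cons]
  · rintro ⟨a, h⟩
    refine ⟨a, ?_⟩
    unfold step at h
    split at h
    · next hh =>
      right
      cases hv : v.val with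
      | nil => rw [hv] at hh; simp at hh
      | cons x t =>
        rw [hv] at hh
        simp only [List.head?_cons, Option.some.injEq] at hh
        subst hh
        rw [hv] at h
        simp only [List.tail_cons] at h
        rw [h]
    · left; exact h

def stepV (a : Fin n) (v : BetheV n) : BetheV n := ⟨step a v.val, step_red v.2⟩

theorem stepV_inj {a b : Fin n} {v : BetheV n} (hab : stepV a v = stepV b v) : a = b :=
  step_inj (congrArg Subtype.val hab)

theorem adj_iff' {u v : BetheV n} : BetheAdj n u v ↔ ∃ a, u = stepV a v := by
  rw [adj_iff]
  exact exists_congr fun a => ⟨fun h => Subtype.ext h, fun h => congrArg Subtype.val h⟩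

theorem adj_symm {u v : BetheV n} (h : BetheAdj n u v) : BetheAdj n v u := by
  obtain ⟨a, h | h⟩ := h
  exacts [⟨a, Or.inr h⟩, ⟨a, Or.inl h⟩]



def mul (u v : List (Fin n)) : List (Fin n) := u.foldr step v

@[simp] theorem mul_nil_left (v : List (Fin n)) : mul [] v = v := rfl

@[simp] theorem mul_cons (a : Fin n) (u v : List (Fin n)) :
    mul (a :: u) v = step a (mul u v) := rfl

theorem mul_red {u v : List (Fin n)} (hv : Red v) : Red (mul u v) := by
  induction u with
  | nil => exact hv
  | cons a u ih => exact step_red ih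

theorem mul_step {a : Fin n} {x w : List (Fin n)} (hx : Red x) (hw : Red w) :
    mul (step a x) w = step a (mul x w) := by
  by_cases hh : x.head? = some a
  · cases x with
    | nil => simp at hh
    | cons b t =>
      simp only [List.head?_cons, Option.some.injEq] at hh
      subst hh
      have h1 : step b (b :: t) = t := by unfold step; rw [if_pos (by simp)]; rfl
      rw [h1, mul_cons, step_step (mul_red hw)]
  · have h1 : step a x = a :: x := by unfold step; rw [if_neg hh]
    rw [h1, mul_cons]

theorem mul_assoc' {u v w : List (Fin n)} (hv : Red v) (hw : Red w) :
    mul (mul u v) w = mul u (mul v w) := by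
  induction u with
  | nil => rfl
  | cons a u ih =>
    rw [mul_cons, mul_step (mul_red hv) hw, ih, mul_cons]

theorem mul_eq_append {u v : List (Fin n)} (huv : Red (u ++ v)) : mul u v = u ++ v := by
  induction u with
  | nil => rfl
  | cons a u ih =>
    have h2 : Red (u ++ v) := (List.isChain_cons.mp huv).2
    have hne : (u ++ v).head? ≠ some a := by
      intro hh
      cases huv' : u ++ v with
      | nil => rw [huv'] at hh; simp at hh
      | cons x t =>
        rw [huv'] at hh
        simp only [List.head?_cons, Option.some.injEq] at hh
        subst hh
        rw [List.cons_append, huv'] at huv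
        exact (List.isChain_cons_cons.mp huv).1 rfl
    rw [mul_cons, ih h2]
    show step a (u ++ v) = a :: u ++ v
    unfold step
    rw [if_neg hne, List.cons_append]

theorem red_reverse {l : List (Fin n)} (hl : Red l) : Red l.reverse := by
  show List.Chain' (· ≠ ·) l.reverse
  refine List.isChain_reverse.mpr ?_
  exact hl.imp fun a b h => (by exact fun he => h he.symm)

theorem mul_reverse_self {l : List (Fin n)} (hl : Red l) : mul l l.reverse = [] := by
  induction l with
  | nil => rfl
  | cons a t ih =>
    have ht : Red t := hl.tail
    have hrev : Red ((a :: t).reverse) := red_reverse hl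
    rw [List.reverse_cons] at hrev ⊢
    have h1 : mul t.reverse [a] = t.reverse ++ [a] := mul_eq_append hrev
    rw [mul_cons, ← h1, ← mul_assoc' (red_reverse ht) (List.isChain_singleton a),
      ih ht, mul_nil_left]
    show step a (step a []) = []
    exact step_step List.isChain_nil



def Wk (n m : ℕ) (u v : BetheV n) : Type :=
  {L : List (BetheV n) // L.length = m + 1 ∧ L.head? = some u ∧
    L.getLast? = some v ∧ L.Chain' (BetheAdj n)}

theorem betheWalks_eq (n m : ℕ) (u v : BetheV n) : betheWalks n m u v = Nat.card (Wk n m u v) := rfl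

/-- Walks of length 0. -/
theorem wk_zero {u v : BetheV n} (L : Wk n 0 u v) : u = v := by
  obtain ⟨L, hlen, hhead, hlast, -⟩ := L
  rw [List.length_eq_one_iff] at hlen
  obtain ⟨x, rfl⟩ := hlen
  simp only [List.head?_cons, Option.some.injEq] at hhead
  simp only [List.getLast?_singleton, Option.some.injEq] at hlast
  rw [← hhead, ← hlast]

instance wk_zero_subsingleton (u v : BetheV n) : Subsingleton (Wk n 0 u v) := by
  constructor
  rintro ⟨L, hlen, hhead, -, -⟩ ⟨M, hlen', hhead', -, -⟩
  rw [List.length_eq_one_iff] at hlen hlen'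
  obtain ⟨x, rfl⟩ := hlen
  obtain ⟨y, rfl⟩ := hlen'
  simp only [List.head?_cons, Option.some.injEq] at hhead hhead'
  subst hhead; subst hhead'
  rfl

theorem card_wk_zero (u v : BetheV n) : Nat.card (Wk n 0 u v) = if u = v then 1 else 0 := by
  split
  · next he =>
    subst he
    have : Nonempty (Wk n 0 u u) := ⟨⟨[u], rfl, rfl, rfl, List.isChain_singleton u⟩⟩
    haveI : Unique (Wk n 0 u u) := uniqueOfSubsingleton this.some
    exact Nat.card_unique
  · next he =>
    haveI : IsEmpty (Wk n 0 u v) := ⟨fun L => he (wk_zero L)⟩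
    exact Nat.card_of_isEmpty

/-- Peel the first vertex off a walk of positive length. -/
def consWalk (m : ℕ) (u v : BetheV n) (p : (a : Fin n) × Wk n m (stepV a u) v) :
    Wk n (m + 1) u v :=
  ⟨u :: p.2.val, by
    obtain ⟨hlen, hhead, hlast, hchain⟩ := p.2.2
    refine ⟨by simp [hlen], rfl, ?_, ?_⟩
    · rw [List.getLast?_cons, hlast]
      rfl
    · refine List.isChain_cons.mpr ?_
      refine ⟨fun y hy => ?_, hchain⟩
      rw [hhead, Option.mem_some_iff] at hy
      subst hy
      exact adj_symm (adj_iff'.mpr ⟨p.1, rfl⟩)⟩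

theorem consWalk_bijective (m : ℕ) (u v : BetheV n) :
    Function.Bijective (consWalk m u v) := by
  constructor
  · rintro ⟨a, M, hM⟩ ⟨b, N, hN⟩ he
    have hval : u :: M = u :: N := congrArg Subtype.val he
    have hMN : M = N := by injection hval
    subst hMN
    have hab : a = b := by
      have h1 := hM.2.1
      have h2 := hN.2.1
      rw [h1] at h2
      exact stepV_inj (Option.some_injective _ h2)
    subst hab
    rfl
  · rintro ⟨L, hlen, hhead, hlast, hchain⟩
    obtain ⟨x, L', rfl⟩ : ∃ x L', L = x :: L' := by
      cases L with
      | nil => simp at hlen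
      | cons x L' => exact ⟨x, L', rfl⟩
    obtain ⟨w, t, rfl⟩ : ∃ w t, L' = w :: t := by
      cases L' with
      | nil => simp at hlen
      | cons w t => exact ⟨w, t, rfl⟩
    have hxu : x = u := by simpa using hhead
    subst hxu
    have hadj : BetheAdj n w x := adj_symm (List.isChain_cons_cons.mp hchain).1
    obtain ⟨a, rfl⟩ := adj_iff'.mp hadj
    refine ⟨⟨a, ⟨stepV a x :: t, by simpa using hlen, rfl,
      by rw [← hlast, List.getLast?_cons_cons], (List.isChain_cons_cons.mp hchain).2⟩⟩, ?_⟩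
    apply Subtype.ext
    rfl

noncomputable def peelEquiv (m : ℕ) (u v : BetheV n) :
    Wk n (m + 1) u v ≃ (a : Fin n) × Wk n m (stepV a u) v :=
  (Equiv.ofBijective _ (consWalk_bijective m u v)).symm

/-- Reversal. -/
def revEquiv (m : ℕ) (u v : BetheV n) : Wk n m u v ≃ Wk n m v u where
  toFun L := ⟨L.val.reverse, by
    obtain ⟨L, hlen, hhead, hlast, hchain⟩ := L
    refine ⟨by simp [hlen], by simpa using hlast, by simpa using hhead, ?_⟩
    refine List.isChain_reverse.mpr ?_
    exact hchain.imp fun x y hxy => adj_symm hxy⟩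
  invFun L := ⟨L.val.reverse, by
    obtain ⟨L, hlen, hhead, hlast, hchain⟩ := L
    refine ⟨by simp [hlen], by simpa using hlast, by simpa using hhead, ?_⟩
    refine List.isChain_reverse.mpr ?_
    exact hchain.imp fun x y hxy => adj_symm hxy⟩
  left_inv L := by apply Subtype.ext; simp
  right_inv L := by apply Subtype.ext; simp

/-- Transport along a graph automorphism. -/
def mapEquiv (e : BetheV n ≃ BetheV n)
    (he : ∀ x y, BetheAdj n x y → BetheAdj n (e x) (e y))
    (he' : ∀ x y, BetheAdj n x y → BetheAdj n (e.symm x) (e.symm y))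
    (m : ℕ) (u v : BetheV n) : Wk n m u v ≃ Wk n m (e u) (e v) where
  toFun L := ⟨L.val.map e, by
    obtain ⟨L, hlen, hhead, hlast, hchain⟩ := L
    refine ⟨by simp [hlen], by rw [List.head?_map, hhead]; rfl,
      by rw [List.getLast?_map, hlast]; rfl, ?_⟩
    exact List.isChain_map_of_isChain e (fun x y hxy => he x y hxy) hchain⟩
  invFun L := ⟨L.val.map e.symm, by
    obtain ⟨L, hlen, hhead, hlast, hchain⟩ := L
    refine ⟨by simp [hlen], by rw [List.head?_map, hhead]; simp,
      by rw [List.getLast?_map, hlast]; simp, ?_⟩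
    exact List.isChain_map_of_isChain e.symm (fun x y hxy => he' x y hxy) hchain⟩
  left_inv L := by
    apply Subtype.ext
    simp [List.map_map]
  right_inv L := by
    apply Subtype.ext
    simp [List.map_map]

def cnt (n : ℕ) : ℕ → BetheV n → BetheV n → ℕ
  | 0, u, v => if u = v then 1 else 0
  | m+1, u, v => ∑ a : Fin n, cnt n m (stepV a u) v

theorem wk_finite_card (m : ℕ) (u v : BetheV n) :
    Finite (Wk n m u v) ∧ Nat.card (Wk n m u v) = cnt n m u v := by
  induction m generalizing u v with
  | zero =>
    constructor
    · rcases eq_or_ne u v with rfl | hne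
      · have : Nonempty (Wk n 0 u u) := ⟨⟨[u], rfl, rfl, rfl, List.isChain_singleton u⟩⟩
        exact Finite.of_subsingleton
      · haveI : IsEmpty (Wk n 0 u v) := ⟨fun L => hne (wk_zero L)⟩
        exact Finite.of_subsingleton
    · rw [card_wk_zero]; rfl
  | succ m ih =>
    haveI : ∀ a : Fin n, Finite (Wk n m (stepV a u) v) := fun a => (ih _ _).1
    haveI hfin : Finite ((a : Fin n) × Wk n m (stepV a u) v) := Finite.instSigma
    haveI : Finite (Wk n (m+1) u v) := Finite.of_equiv _ (peelEquiv m u v).symm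
    refine ⟨this, ?_⟩
    rw [Nat.card_congr (peelEquiv m u v)]
    haveI : ∀ a : Fin n, Fintype (Wk n m (stepV a u) v) := fun a => Fintype.ofFinite _
    rw [Nat.card_eq_fintype_card, Fintype.card_sigma]
    show _ = ∑ a : Fin n, cnt n m (stepV a u) v
    congr 1
    funext a
    rw [← Nat.card_eq_fintype_card, (ih _ _).2]



/-- The combinatorial recursion solving the walk counts. -/
def bb (n : ℕ) : ℕ → ℕ → ℕ
  | 0, d => if d = 0 then 1 else 0
  | m+1, 0 => n * bb n m 1
  | m+1, d+1 => bb n m d + (n-1) * bb n m (d+2)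

theorem step_length_nil (a : Fin n) : (step a ([] : List (Fin n))).length = 1 := by
  unfold step; rw [if_neg (by simp)]; rfl

theorem step_length_eq (a : Fin n) {l : List (Fin n)} {x : Fin n} {t : List (Fin n)}
    (hl : l = x :: t) : (step a l).length = if a = x then t.length else t.length + 2 := by
  subst hl
  unfold step
  by_cases hax : a = x
  · subst hax; rw [if_pos (by simp), if_pos rfl]; rfl
  · rw [if_neg (by simp [Ne.symm hax]), if_neg hax]; simp

theorem cnt_eq_bb (m : ℕ) (v : BetheV n) : cnt n m v (betheRoot n) = bb n m v.val.length := by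
  induction m generalizing v with
  | zero =>
    show (if v = betheRoot n then 1 else 0) = bb n 0 v.val.length
    have hiff : v = betheRoot n ↔ v.val.length = 0 := by
      constructor
      · rintro rfl; rfl
      · intro hl
        exact Subtype.ext (List.length_eq_zero_iff.mp hl)
    show _ = if v.val.length = 0 then 1 else 0
    by_cases hv : v = betheRoot n
    · rw [if_pos hv, if_pos (hiff.mp hv)]
    · rw [if_neg hv, if_neg (fun hl => hv (hiff.mpr hl))]
  | succ m ih =>
    show (∑ a : Fin n, cnt n m (stepV a v) (betheRoot n)) = _
    have hsum : ∀ a : Fin n, cnt n m (stepV a v) (betheRoot n) = bb n m (step a v.val).length :=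
      fun a => ih (stepV a v)
    simp only [hsum]
    cases hv : v.val with
    | nil =>
      simp only [step_length_nil]
      rw [Finset.sum_const, Finset.card_univ, Fintype.card_fin, smul_eq_mul]
      rfl
    | cons x t =>
      have hlen : ∀ a : Fin n, (step a (x :: t)).length =
          if a = x then t.length else t.length + 2 := fun a => step_length_eq a rfl
      simp only [hlen]
      rw [← Finset.sum_erase_add _ _ (Finset.mem_univ x), if_pos rfl]
      have hconst : ∀ a ∈ Finset.univ.erase x,
          bb n m (if a = x then t.length else t.length + 2) = bb n m (t.length + 2) := by
        intro a ha
        rw [if_neg (Finset.ne_of_mem_erase ha)]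
      rw [Finset.sum_congr rfl hconst, Finset.sum_const,
        Finset.card_erase_of_mem (Finset.mem_univ x), Finset.card_univ, Fintype.card_fin,
        smul_eq_mul]
      show (n - 1) * bb n m (t.length + 2) + bb n m t.length = bb n (m+1) (t.length+1)
      show _ = bb n m t.length + (n-1) * bb n m (t.length+2)
      ring

/-- Right multiplication by a reduced word is a graph automorphism. -/
def rmul (w : List (Fin n)) (hw : w.Chain' (· ≠ ·)) : BetheV n ≃ BetheV n where
  toFun u := ⟨mul u.val w, mul_red hw⟩
  invFun u := ⟨mul u.val w.reverse, mul_red (red_reverse hw)⟩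
  left_inv u := by
    apply Subtype.ext
    show mul (mul u.val w) w.reverse = u.val
    rw [mul_assoc' hw (red_reverse hw), mul_reverse_self hw]
    have : (u.val ++ []).Chain' (· ≠ ·) := by simpa using u.2
    rw [show mul u.val [] = u.val ++ [] from mul_eq_append this, List.append_nil]
  right_inv u := by
    apply Subtype.ext
    show mul (mul u.val w.reverse) w = u.val
    have h1 : mul w.reverse w = [] := by
      have := mul_reverse_self (red_reverse hw)
      rwa [List.reverse_reverse] at this
    rw [mul_assoc' (red_reverse hw) hw, h1]
    have : (u.val ++ []).Chain' (· ≠ ·) := by simpa using u.2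
    rw [show mul u.val [] = u.val ++ [] from mul_eq_append this, List.append_nil]

theorem rmul_adj (w : List (Fin n)) (hw : w.Chain' (· ≠ ·)) (x y : BetheV n)
    (hxy : BetheAdj n x y) : BetheAdj n (rmul w hw x) (rmul w hw y) := by
  obtain ⟨a, ha⟩ := adj_iff.mp hxy
  refine adj_iff.mpr ⟨a, ?_⟩
  show mul x.val w = step a (mul y.val w)
  rw [ha, mul_step y.2 hw]

theorem rmul_symm_adj (w : List (Fin n)) (hw : w.Chain' (· ≠ ·)) (x y : BetheV n)
    (hxy : BetheAdj n x y) : BetheAdj n ((rmul w hw).symm x) ((rmul w hw).symm y) := by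
  obtain ⟨a, ha⟩ := adj_iff.mp hxy
  refine adj_iff.mpr ⟨a, ?_⟩
  show mul x.val w.reverse = step a (mul y.val w.reverse)
  rw [ha, mul_step y.2 (red_reverse hw)]

theorem rmul_self (v : BetheV n) :
    rmul v.val.reverse (red_reverse v.2) v = betheRoot n :=
  Subtype.ext (mul_reverse_self v.2)



open PowerSeries

theorem ps_main (n : ℕ) (hn : 2 ≤ n) (h : PowerSeries ℚ)
    (hh : h = 1 + ((n : PowerSeries ℚ) - 1) * X ^ 2 * h ^ 2) :
    IsUnit (1 - (n : PowerSeries ℚ) * X ^ 2 * h) ∧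
    (∀ d m : ℕ, (coeff m) (X ^ d * h ^ d *
      (1 - (n : PowerSeries ℚ) * X ^ 2 * h)⁻¹) = (bb n m d : ℚ)) := by
  set U : PowerSeries ℚ := 1 - (n : PowerSeries ℚ) * X ^ 2 * h with hU
  have hUc : constantCoeff U = 1 := by
    rw [hU]
    simp [map_sub, map_mul, map_pow, constantCoeff_X]
  have hunit : IsUnit U := by
    rw [PowerSeries.isUnit_iff_constantCoeff, hUc]
    exact isUnit_one
  set g : PowerSeries ℚ := U⁻¹ with hgdef
  have hg : g * U = 1 := by
    rw [hgdef]
    exact PowerSeries.inv_mul_cancel U (by rw [hUc]; exact one_ne_zero)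
  have hg' : g * (1 - (n : PowerSeries ℚ) * X ^ 2 * h) = 1 := by rw [← hU]; exact hg
  refine ⟨hunit, ?_⟩
  set C : ℕ → PowerSeries ℚ := fun d => X ^ d * h ^ d * g with hC
  have hpow : ∀ d : ℕ, h ^ (d+1) = h ^ d + ((n : PowerSeries ℚ) - 1) * X ^ 2 * h ^ (d+2) := by
    intro d
    calc h ^ (d+1) = h ^ d * h := by ring
    _ = h ^ d * (1 + ((n : PowerSeries ℚ) - 1) * X ^ 2 * h ^ 2) := by rw [← hh]
    _ = h ^ d + ((n : PowerSeries ℚ) - 1) * X ^ 2 * h ^ (d+2) := by ring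
  have key1 : ∀ d : ℕ, C (d+1) = X * (C d + ((n : PowerSeries ℚ) - 1) * C (d+2)) := by
    intro d
    simp only [hC]
    linear_combination (X ^ (d+1) * g) * hpow d
  have key2 : C 0 = 1 + (n : PowerSeries ℚ) * X * C 1 := by
    simp only [hC]
    linear_combination hg'
  have hnC : (n : PowerSeries ℚ) = PowerSeries.C (n : ℚ) := by
    simp
  have hn1C : (n : PowerSeries ℚ) - 1 = PowerSeries.C ((n : ℚ) - 1) := by
    simp [map_sub]
  have hcoeff : ∀ m d : ℕ, coeff m (C d) = (bb n m d : ℚ) := by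
    intro m
    induction m with
    | zero =>
      intro d
      cases d with
      | zero =>
        rw [key2]
        simp only [map_add, coeff_zero_eq_constantCoeff, map_one, map_mul, constantCoeff_X]
        norm_num [bb]
      | succ d =>
        rw [key1 d]
        simp only [coeff_zero_eq_constantCoeff, map_mul, constantCoeff_X]
        norm_num [bb]
    | succ m ih =>
      intro d
      cases d with
      | zero =>
        rw [key2, map_add, hnC, mul_assoc, coeff_C_mul]
        rw [coeff_succ_X_mul, ih 1]
        have : coeff (m+1) (1 : PowerSeries ℚ) = 0 := by
          rw [coeff_one]
          simp
        rw [this, zero_add]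
        show ((n:ℚ)) * (bb n m 1 : ℚ) = ((bb n (m+1) 0 : ℕ) : ℚ)
        rw [show bb n (m+1) 0 = n * bb n m 1 from rfl]
        push_cast
        ring
      | succ d =>
        rw [key1 d, coeff_succ_X_mul, map_add, hn1C, coeff_C_mul, ih d, ih (d+2)]
        rw [show bb n (m+1) (d+1) = bb n m d + (n-1) * bb n m (d+2) from rfl]
        push_cast [Nat.cast_sub (by omega : 1 ≤ n)]
        ring
  intro d m
  exact hcoeff m d


theorem walks_root (n m : ℕ) (v : BetheV n) :
    betheWalks n m (betheRoot n) v = bb n m v.val.length := by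
  rw [betheWalks_eq, Nat.card_congr (revEquiv m (betheRoot n) v),
    (wk_finite_card m v (betheRoot n)).2, cnt_eq_bb]

theorem walks_closed (n m : ℕ) (v : BetheV n) : betheWalks n m v v = bb n m 0 := by
  have e := mapEquiv (rmul v.val.reverse (red_reverse v.2))
    (rmul_adj v.val.reverse (red_reverse v.2))
    (rmul_symm_adj v.val.reverse (red_reverse v.2)) m v v
  rw [rmul_self v] at e
  rw [betheWalks_eq, Nat.card_congr e, (wk_finite_card m (betheRoot n) (betheRoot n)).2]
  exact cnt_eq_bb m (betheRoot n)

open PowerSeries in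
theorem ps_quad (n : ℕ) (hn : 2 ≤ n) (h : PowerSeries ℚ)
    (hh : h = 1 + ((n : PowerSeries ℚ) - 1) * X ^ 2 * h ^ 2) :
    ((n : PowerSeries ℚ) ^ 2 * X ^ 2 - 1) * ((1 - (n : PowerSeries ℚ) * X ^ 2 * h)⁻¹) ^ 2 +
      (2 - (n : PowerSeries ℚ)) * (1 - (n : PowerSeries ℚ) * X ^ 2 * h)⁻¹ +
      ((n : PowerSeries ℚ) - 1) = 0 := by
  set U : PowerSeries ℚ := 1 - (n : PowerSeries ℚ) * X ^ 2 * h with hU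
  have hUc : constantCoeff U = 1 := by
    rw [hU]
    simp [map_sub, map_mul, map_pow, constantCoeff_X]
  set g : PowerSeries ℚ := U⁻¹ with hgdef
  have hg : g * U = 1 := by
    rw [hgdef]
    exact PowerSeries.inv_mul_cancel U (by rw [hUc]; exact one_ne_zero)
  have hg' : g * (1 - (n : PowerSeries ℚ) * X ^ 2 * h) = 1 := by rw [← hU]; exact hg
  linear_combination (-(n : PowerSeries ℚ)^2 * g^2 * X^2) * hh +
    (((n : PowerSeries ℚ) - 1) * ((n : PowerSeries ℚ) * X^2 * h * g + g - 1) -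
      (n : PowerSeries ℚ) * g) * hg'

end Stmt19

/-- Walk generating functions of the Bethe lattice: let `n ≥ 2` and
let `h ∈ ℚ[[z]]` satisfy `h = 1 + (n−1)·z²·h²` (this determines `h` uniquely).  Then
`1 − n·z²·h` is invertible in `ℚ[[z]]`; for every vertex `v` at distance `d ≥ 0` from
the root `o` the generating function of the numbers of walks from `o` to `v` equals
`z^d·h^d·(1 − n·z²·h)⁻¹`; and the closed-walk generating function `g` at any vertex
satisfies `(n²z² − 1)·g² + (2 − n)·g + (n − 1) = 0`. -/
theorem stmt19 (n : ℕ) (hn : 2 ≤ n) (h : PowerSeries ℚ)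
    (hh : h = 1 + ((n : PowerSeries ℚ) - 1) * PowerSeries.X ^ 2 * h ^ 2) :
    IsUnit (1 - (n : PowerSeries ℚ) * PowerSeries.X ^ 2 * h) ∧
    (∀ (d : ℕ) (v : BetheV n), v.val.length = d →
      PowerSeries.mk (fun m => (betheWalks n m (betheRoot n) v : ℚ)) =
        PowerSeries.X ^ d * h ^ d *
          (1 - (n : PowerSeries ℚ) * PowerSeries.X ^ 2 * h)⁻¹) ∧
    (∀ v : BetheV n,
      ((n : PowerSeries ℚ) ^ 2 * PowerSeries.X ^ 2 - 1) *
          PowerSeries.mk (fun m => (betheWalks n m v v : ℚ)) ^ 2 +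
        (2 - (n : PowerSeries ℚ)) * PowerSeries.mk (fun m => (betheWalks n m v v : ℚ)) +
        ((n : PowerSeries ℚ) - 1) = 0) := by
  obtain ⟨hunit, hcoeff⟩ := Stmt19.ps_main n hn h hh
  refine ⟨hunit, ?_, ?_⟩
  · intro d v hv
    apply PowerSeries.ext
    intro m
    rw [PowerSeries.coeff_mk, Stmt19.walks_root n m v, hv, hcoeff d m]
  · intro v
    have hmk : PowerSeries.mk (fun m => (betheWalks n m v v : ℚ)) =
        (1 - (n : PowerSeries ℚ) * PowerSeries.X ^ 2 * h)⁻¹ := by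
      apply PowerSeries.ext
      intro m
      rw [PowerSeries.coeff_mk, Stmt19.walks_closed n m v]
      have := hcoeff 0 m
      rw [pow_zero, pow_zero, one_mul, one_mul] at this
      exact this.symm
    rw [hmk]
    exact Stmt19.ps_quad n hn h hh
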